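/- Let k, n be non-negative integers and σ a permutation of Fin n with cycle type (j_i(σ))_{i=1}^∞. Then the number of k-ary operations ∗ : (Fin n)^k → Fin n for which σ is a k-magma automorphism equals ∏_{(r_1,…,r_k) ∈ [n]^k} (∑_{d ∣ lcm(r_1,…,r_k)} d · j_d(σ))^{(r_1⋯r_k / lcm(r_1,…,r_k)) · j_{r_1}(σ) ⋯ j_{r_k}(σ)}, where lcm of the empty tuple is taken to be 1. -/

import Mathlib

/-- `cycleCount σ i` is the number of `i`-cycles in the disjoint cycle decomposition of the
permutation `σ` (fixed points counted as `1`-cycles). -/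
noncomputable def cycleCount {X : Type*} (σ : Equiv.Perm X) (i : ℕ) : ℕ :=
  Nat.card {a : X // Function.minimalPeriod (⇑σ) a = i} / i

set_option linter.unusedSectionVars false

open Function MulAction Subgroup

section helpers
variable {X : Type*} [Fintype X] (π : Equiv.Perm X)

lemma minper_mem (x : X) : x ∈ periodicPts ⇑π :=
  ⟨orderOf π, orderOf_pos π, by
    rw [Function.IsPeriodicPt, Equiv.Perm.iterate_eq_pow, pow_orderOf_eq_one]; rfl⟩

lemma minper_pos (x : X) : 0 < minimalPeriod ⇑π x :=
  Function.minimalPeriod_pos_of_mem_periodicPts (minper_mem π x)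

lemma pow_apply_eq_iff (N : ℕ) (x : X) : (π ^ N) x = x ↔ minimalPeriod ⇑π x ∣ N := by
  rw [← isPeriodicPt_iff_minimalPeriod_dvd, Function.IsPeriodicPt, Function.IsFixedPt,
    Equiv.Perm.iterate_eq_pow]

lemma card_orbit_zpowers (x : X) :
    Nat.card (MulAction.orbit (zpowers π) x) = minimalPeriod ⇑π x := by
  have h : (π • ·) = ⇑π := rfl
  rw [Nat.card_congr (MulAction.orbitZPowersEquiv π x), h, Nat.card_zmod]

end helpers

section orb
variable {X : Type*} [Fintype X] (π : Equiv.Perm X)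

lemma const_on_orbit {I : Type*} {c : X → I} (hc : ∀ x, c (π x) = c x) {x y : X}
    (h : y ∈ MulAction.orbit (zpowers π) x) : c y = c x := by
  obtain ⟨⟨g, z, rfl⟩, rfl⟩ := h
  show c ((π ^ z) x) = c x
  induction z using Int.induction_on with
  | zero => rfl
  | succ i ih => rw [add_comm, zpow_add, zpow_one, Equiv.Perm.mul_apply, hc, ih]
  | pred i ih =>
      rw [sub_eq_add_neg, add_comm, zpow_add, Equiv.Perm.mul_apply]
      have := hc ((π ^ (-1 : ℤ)) ((π ^ (-i : ℤ)) x))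
      rw [show π ((π ^ (-1 : ℤ)) ((π ^ (-i:ℤ)) x)) = (π ^ (-i:ℤ)) x by
        rw [← Equiv.Perm.mul_apply, ← zpow_one_add]; norm_num] at this
      rw [← this]; exact ih

lemma orb_count {I : Type*} (c : X → I) (hc : ∀ x, c (π x) = c x) (v : I) (m : ℕ)
    (hm : ∀ x, c x = v → minimalPeriod ⇑π x = m) :
    Nat.card {x : X // c x = v} =
      m * Nat.card {ω : orbitRel.Quotient (zpowers π) X // c ω.out = v} := by
  classical
  set e := selfEquivSigmaOrbits (zpowers π) X with he
  have key : ∀ x : X, c x = c ((e x).1).out := by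
    intro x
    have hmem : ((e x).2 : X) ∈ MulAction.orbit (zpowers π) ((e x).1).out := (e x).2.2
    have : ((e x).2 : X) = x := rfl
    rw [← this]
    exact const_on_orbit π hc hmem
  have e1 : {x : X // c x = v} ≃
      {p : Σ ω : orbitRel.Quotient (zpowers π) X, MulAction.orbit (zpowers π) ω.out //
        c p.1.out = v} :=
    Equiv.subtypeEquiv e (fun x => by rw [key x])
  have e2 := Equiv.subtypeSigmaEquiv
    (fun ω : orbitRel.Quotient (zpowers π) X => MulAction.orbit (zpowers π) ω.out)
    (fun ω => c ω.out = v)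
  rw [Nat.card_congr (e1.trans e2)]
  letI : Fintype (orbitRel.Quotient (zpowers π) X) := Fintype.ofFinite _
  letI : Fintype {ω : orbitRel.Quotient (zpowers π) X // c ω.out = v} := Fintype.ofFinite _
  rw [Nat.card_eq_fintype_card, Fintype.card_sigma]
  have : ∀ ω : {ω : orbitRel.Quotient (zpowers π) X // c ω.out = v},
      Fintype.card (MulAction.orbit (zpowers π) (ω : orbitRel.Quotient (zpowers π) X).out) = m := by
    intro ω
    rw [← Nat.card_eq_fintype_card, card_orbit_zpowers]
    exact hm _ ω.2
  rw [Finset.sum_congr rfl (fun ω _ => this ω), Finset.sum_const, smul_eq_mul,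
    Nat.card_eq_fintype_card, mul_comm]
  rfl
end orb

section fix
variable {X : Type*} [Fintype X] (π : Equiv.Perm X)

lemma card_minper (d : ℕ) (hd : 0 < d) :
    Nat.card {x : X // minimalPeriod ⇑π x = d} = d * cycleCount π d := by
  obtain ⟨t, ht⟩ : ∃ t, Nat.card {x : X // minimalPeriod ⇑π x = d} = d * t :=
    ⟨_, orb_count π (minimalPeriod ⇑π) (fun x => minimalPeriod_apply (minper_mem π x)) d d
      (fun _ h => h)⟩
  rw [ht, cycleCount, ht, Nat.mul_div_cancel_left _ hd]

lemma card_fix (N : ℕ) (hN : 0 < N) :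
    Nat.card {x : X // (π ^ N) x = x} = ∑ d ∈ N.divisors, d * cycleCount π d := by
  classical
  rw [Nat.card_eq_fintype_card, Fintype.card_subtype]
  rw [Finset.card_eq_sum_card_fiberwise (f := fun x => minimalPeriod ⇑π x) (t := N.divisors)
    (fun x hx => Nat.mem_divisors.2 ⟨(pow_apply_eq_iff π N x).1 (Finset.mem_filter.1 hx).2,
      hN.ne'⟩)]
  refine Finset.sum_congr rfl (fun d hd => ?_)
  rw [← card_minper π d (Nat.pos_of_mem_divisors hd), Nat.card_eq_fintype_card,
    Fintype.card_subtype]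
  congr 1
  ext x
  simp only [Finset.mem_filter, Finset.mem_univ, true_and, and_iff_right_iff_imp]
  intro h
  exact (pow_apply_eq_iff π N x).2 (h ▸ (Nat.mem_divisors.1 hd).1)
end fix

section equivar
variable {A B : Type*} [Fintype A] [Fintype B] (τ : Equiv.Perm A) (σ : Equiv.Perm B)

lemma iterate_equivariant {f : A → B} (hf : ∀ a, σ (f a) = f (τ a)) (j : ℕ) (a : A) :
    (σ ^ j) (f a) = f ((τ ^ j) a) := by
  induction j with
  | zero => rfl
  | succ i ih =>
      rw [pow_succ', Equiv.Perm.mul_apply, pow_succ', Equiv.Perm.mul_apply, ih, hf]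

lemma pow_fixed_pt (x : B) (m : ℕ) (hx : (σ ^ m) x = x) (q : ℕ) : ((σ ^ m) ^ q) x = x := by
  induction q with
  | zero => rfl
  | succ i ih => rw [pow_succ, Equiv.Perm.mul_apply, hx, ih]

lemma pow_eq_of_mod (x : B) (m : ℕ) (hx : (σ ^ m) x = x) {j1 j2 : ℕ}
    (h : j1 % m = j2 % m) : (σ ^ j1) x = (σ ^ j2) x := by
  have key : ∀ j : ℕ, (σ ^ j) x = (σ ^ (j % m)) x := by
    intro j
    conv_lhs => rw [← Nat.mod_add_div j m, pow_add, Equiv.Perm.mul_apply, pow_mul,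
      pow_fixed_pt σ x m hx]
  rw [key j1, key j2, h]

lemma exp_congr (b : A) {j1 j2 : ℕ} (h : (τ ^ j1) b = (τ ^ j2) b) :
    j1 % (minimalPeriod ⇑τ b) = j2 % (minimalPeriod ⇑τ b) := by
  wlog hle : j1 ≤ j2 generalizing j1 j2
  · exact (this h.symm (le_of_not_ge hle)).symm
  have h2 : (τ ^ (j2 - j1)) ((τ ^ j1) b) = (τ ^ j1) b := by
    rw [← Equiv.Perm.mul_apply, ← pow_add, Nat.sub_add_cancel hle, h]
  have hmp : minimalPeriod ⇑τ ((τ ^ j1) b) = minimalPeriod ⇑τ b := by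
    have := minimalPeriod_apply_iterate (f := ⇑τ) (minper_mem τ b) j1
    rwa [Equiv.Perm.iterate_eq_pow] at this
  have hdvd : minimalPeriod ⇑τ b ∣ j2 - j1 := by
    rw [← hmp]; exact (pow_apply_eq_iff τ _ _).1 h2
  exact (Nat.modEq_iff_dvd' hle).2 hdvd

lemma exists_nat_pow {b a : A} (h : ∃ z : ℤ, (τ ^ z) b = a) : ∃ j : ℕ, (τ ^ j) b = a := by
  classical
  obtain ⟨j, _, _, hj⟩ := Equiv.Perm.SameCycle.exists_pow_eq τ h
  exact ⟨j, hj⟩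
end equivar

section equivar2
variable {A B : Type*} [Fintype A] [Fintype B] (τ : Equiv.Perm A) (σ : Equiv.Perm B)

lemma exists_nat_out (a : A) :
    ∃ j : ℕ, (τ ^ j) (Quotient.mk'' a : orbitRel.Quotient (zpowers τ) A).out = a := by
  apply exists_nat_pow τ
  have h : (Quotient.mk'' a : orbitRel.Quotient (zpowers τ) A).out ∈
      MulAction.orbit (zpowers τ) a := by
    rw [← orbitRel_apply]
    exact Quotient.exact' (Quotient.out_eq' _)
  obtain ⟨⟨g, z, rfl⟩, hg⟩ := h
  refine ⟨-z, ?_⟩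
  have : (τ ^ z) a = _ := hg
  rw [← this, ← Equiv.Perm.mul_apply, ← zpow_add]
  norm_num

noncomputable def nexp (a : A) : ℕ := (exists_nat_out τ a).choose

lemma nexp_spec (a : A) :
    (τ ^ nexp τ a) (Quotient.mk'' a : orbitRel.Quotient (zpowers τ) A).out = a :=
  (exists_nat_out τ a).choose_spec

lemma mk_apply_eq (a : A) :
    (Quotient.mk'' (τ a) : orbitRel.Quotient (zpowers τ) A) = Quotient.mk'' a :=
  Quotient.sound' (⟨⟨τ, mem_zpowers τ⟩, rfl⟩ : (τ a) ∈ MulAction.orbit (zpowers τ) a)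

noncomputable def equivarEquiv :
    {f : A → B // ∀ a, σ (f a) = f (τ a)} ≃
      (∀ ω : orbitRel.Quotient (zpowers τ) A,
        {x : B // (σ ^ minimalPeriod ⇑τ ω.out) x = x}) where
  toFun f ω := ⟨f.1 ω.out, by
    rw [iterate_equivariant τ σ f.2, (pow_apply_eq_iff τ _ _).2 dvd_rfl]⟩
  invFun g := ⟨fun a => (σ ^ nexp τ a) (g (Quotient.mk'' a)).1, by
    intro a
    have hω := mk_apply_eq τ a
    have hs1 := nexp_spec τ a
    have hs2 := nexp_spec τ (τ a)
    rw [hω] at hs2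
    show σ ((σ ^ nexp τ a) (g (Quotient.mk'' a)).1) =
      (σ ^ nexp τ (τ a)) (g (Quotient.mk'' (τ a))).1
    have hval : ((g (Quotient.mk'' (τ a))).1 : B) = (g (Quotient.mk'' a)).1 := by rw [hω]
    rw [hval, ← Equiv.Perm.mul_apply, ← pow_succ']
    apply pow_eq_of_mod σ _ _ (g (Quotient.mk'' a)).2
    apply exp_congr τ
    rw [pow_succ', Equiv.Perm.mul_apply, hs1, hs2]⟩
  left_inv f := by
    apply Subtype.ext
    funext a
    show (σ ^ _) (f.1 _) = f.1 a
    rw [iterate_equivariant τ σ f.2, nexp_spec τ a]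
  right_inv g := by
    funext ω
    apply Subtype.ext
    show (σ ^ nexp τ ω.out) (g (Quotient.mk'' ω.out)).1 = (g ω).1
    have hω : (Quotient.mk'' ω.out : orbitRel.Quotient (zpowers τ) A) = ω := Quotient.out_eq' ω
    have hs := nexp_spec τ ω.out
    rw [hω] at hs
    have hval : ((g (Quotient.mk'' ω.out)).1 : B) = (g ω).1 := by rw [hω]
    rw [hval]
    have hdvd : minimalPeriod ⇑τ ω.out ∣ nexp τ ω.out := (pow_apply_eq_iff τ _ _).1 hs
    have hmod : nexp τ ω.out % minimalPeriod ⇑τ ω.out = 0 % minimalPeriod ⇑τ ω.out := by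
      rw [Nat.zero_mod]
      obtain ⟨t, ht⟩ := hdvd
      rw [ht]
      exact Nat.mul_mod_right _ _
    have := pow_eq_of_mod σ (g ω).1 _ (g ω).2 hmod
    rw [this, pow_zero]; rfl

lemma card_equivariant [Fintype (orbitRel.Quotient (zpowers τ) A)] :
    Nat.card {f : A → B // ∀ a, σ (f a) = f (τ a)} =
      ∏ ω : orbitRel.Quotient (zpowers τ) A,
        Nat.card {x : B // (σ ^ minimalPeriod ⇑τ ω.out) x = x} := by
  rw [Nat.card_congr (equivarEquiv τ σ), Nat.card_pi]
end equivar2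

section pi
variable {X : Type*} [Fintype X] {k : ℕ} (σ : Equiv.Perm X)

lemma tau_pow_apply (N : ℕ) (a : Fin k → X) :
    ((Equiv.arrowCongr (Equiv.refl (Fin k)) σ) ^ N) a = fun i => (σ ^ N) (a i) := by
  set τ := Equiv.arrowCongr (Equiv.refl (Fin k)) σ with hτ
  induction N generalizing a with
  | zero => rfl
  | succ m ih =>
      funext i
      rw [pow_succ, Equiv.Perm.mul_apply, ih (τ a)]
      show (σ ^ m) (σ (a i)) = (σ ^ (m + 1)) (a i)
      rw [← Equiv.Perm.mul_apply, ← pow_succ]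

lemma minper_pi (a : Fin k → X) :
    minimalPeriod ⇑(Equiv.arrowCongr (Equiv.refl (Fin k)) σ) a =
      Finset.univ.lcm (fun i => minimalPeriod ⇑σ (a i)) := by
  set τ := Equiv.arrowCongr (Equiv.refl (Fin k)) σ with hτ
  apply Nat.dvd_antisymm
  · rw [← pow_apply_eq_iff τ, tau_pow_apply]
    funext i
    exact (pow_apply_eq_iff σ _ _).2 (Finset.dvd_lcm (Finset.mem_univ i))
  · apply Finset.lcm_dvd
    intro i _
    rw [← pow_apply_eq_iff σ]
    have : (τ ^ minimalPeriod ⇑τ a) a = a := (pow_apply_eq_iff τ _ _).2 dvd_rfl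
    rw [tau_pow_apply] at this
    exact congrFun this i

lemma minper_le_card (π : Equiv.Perm X) (x : X) : minimalPeriod ⇑π x ≤ Fintype.card X := by
  rw [← card_orbit_zpowers, ← Nat.card_eq_fintype_card]
  exact Nat.card_le_card_of_injective Subtype.val Subtype.val_injective
end pi


set_option maxHeartbeats 1000000 in
/-- The number of `k`-ary operations on `Fin n` admitting a given permutation `σ` as a
`k`-magma automorphism equals
`∏_{(r₁,…,r_k) ∈ [n]^k} (∑_{d ∣ lcm(r₁,…,r_k)} d j_d(σ))^{(r₁⋯r_k / lcm(r₁,…,r_k)) j_{r₁}(σ) ⋯ j_{r_k}(σ)}`,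
where `(jᵢ(σ))` is the cycle type of `σ` and the `lcm` of the empty tuple is `1`
(`Finset.lcm` over the empty type). -/
theorem card_kops_with_automorphism (n k : ℕ) (σ : Equiv.Perm (Fin n)) :
    Nat.card {f : (Fin k → Fin n) → Fin n //
        ∀ a : Fin k → Fin n, σ (f a) = f (fun i => σ (a i))} =
      ∏ r ∈ Fintype.piFinset (fun _ : Fin k => Finset.Icc 1 n),
        (∑ d ∈ (Finset.univ.lcm r).divisors, d * cycleCount σ d) ^
          (((∏ i, r i) / Finset.univ.lcm r) * ∏ i, cycleCount σ (r i)) := by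
  classical
  set τ := Equiv.arrowCongr (Equiv.refl (Fin k)) σ with hτdef
  letI : Fintype (orbitRel.Quotient (zpowers τ) (Fin k → Fin n)) := Fintype.ofFinite _
  have h0 : Nat.card {f : (Fin k → Fin n) → Fin n //
        ∀ a : Fin k → Fin n, σ (f a) = f (fun i => σ (a i))} =
      ∏ ω : orbitRel.Quotient (zpowers τ) (Fin k → Fin n),
        Nat.card {x : Fin n // (σ ^ minimalPeriod ⇑τ ω.out) x = x} := card_equivariant τ σ
  rw [h0]
  set c : (Fin k → Fin n) → (Fin k → ℕ) := fun a i => minimalPeriod ⇑σ (a i) with hc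
  have h1 : ∀ ω : orbitRel.Quotient (zpowers τ) (Fin k → Fin n),
      Nat.card {x : Fin n // (σ ^ minimalPeriod ⇑τ ω.out) x = x} =
        ∑ d ∈ (Finset.univ.lcm (c ω.out)).divisors, d * cycleCount σ d := by
    intro ω
    rw [card_fix σ _ (minper_pos τ ω.out), minper_pi σ ω.out]
  rw [Finset.prod_congr rfl (fun ω _ => h1 ω)]
  have hmaps : ∀ ω ∈ (Finset.univ : Finset (orbitRel.Quotient (zpowers τ) (Fin k → Fin n))),
      c ω.out ∈ Fintype.piFinset (fun _ : Fin k => Finset.Icc 1 n) := by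
    intro ω _
    rw [Fintype.mem_piFinset]
    intro i
    rw [Finset.mem_Icc]
    exact ⟨minper_pos σ _, by simpa using minper_le_card σ (ω.out i)⟩
  rw [← Finset.prod_fiberwise_of_maps_to hmaps
    (fun ω => ∑ d ∈ (Finset.univ.lcm (c ω.out)).divisors, d * cycleCount σ d)]
  refine Finset.prod_congr rfl (fun r hr => ?_)
  have hfib : ∏ ω ∈ Finset.univ.filter
        (fun ω : orbitRel.Quotient (zpowers τ) (Fin k → Fin n) => c ω.out = r),
        (∑ d ∈ (Finset.univ.lcm (c ω.out)).divisors, d * cycleCount σ d) =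
      (∑ d ∈ (Finset.univ.lcm r).divisors, d * cycleCount σ d) ^
        (Finset.univ.filter
          (fun ω : orbitRel.Quotient (zpowers τ) (Fin k → Fin n) => c ω.out = r)).card := by
    rw [← Finset.prod_const]
    exact Finset.prod_congr rfl (fun ω hω => by rw [(Finset.mem_filter.1 hω).2])
  rw [hfib]
  congr 1
  -- now: fiber card = ((∏ i, r i) / L) * ∏ i, cycleCount σ (r i)
  have hrpos : ∀ i, 0 < r i := by
    intro i
    have := (Fintype.mem_piFinset.1 hr) i
    exact (Finset.mem_Icc.1 this).1
  have hLdvd : Finset.univ.lcm r ∣ ∏ i, r i :=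
    Finset.lcm_dvd (fun i _ => Finset.dvd_prod_of_mem r (Finset.mem_univ i))
  have hprodpos : 0 < ∏ i, r i := Finset.prod_pos (fun i _ => hrpos i)
  have hLpos : 0 < Finset.univ.lcm r := Nat.pos_of_dvd_of_pos hLdvd hprodpos
  have horb := orb_count τ c
    (fun a => funext (fun i => minimalPeriod_apply (minper_mem σ (a i)))) r (Finset.univ.lcm r)
    (fun a ha => by rw [minper_pi σ a]; exact congrArg Finset.univ.lcm ha)
  have hcard1 : Nat.card {a : Fin k → Fin n // c a = r} =
      (∏ i, r i) * ∏ i, cycleCount σ (r i) := by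
    have e : {a : Fin k → Fin n // c a = r} ≃ ∀ i, {x : Fin n // minimalPeriod ⇑σ x = r i} :=
      (Equiv.subtypeEquivRight (fun a => funext_iff)).trans
        (Equiv.subtypePiEquivPi (p := fun i x => minimalPeriod ⇑σ x = r i))
    rw [Nat.card_congr e, Nat.card_pi,
      Finset.prod_congr rfl (fun i _ => card_minper σ (r i) (hrpos i)),
      Finset.prod_mul_distrib]
  have hcard2 : (Finset.univ.filter
      (fun ω : orbitRel.Quotient (zpowers τ) (Fin k → Fin n) => c ω.out = r)).card =
      Nat.card {ω : orbitRel.Quotient (zpowers τ) (Fin k → Fin n) // c ω.out = r} := by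
    rw [Nat.card_eq_fintype_card, Fintype.card_subtype]
  rw [hcard2]
  apply Nat.eq_of_mul_eq_mul_left hLpos
  rw [← horb, hcard1, ← mul_assoc, Nat.mul_div_cancel' hLdvd]
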